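/- Gelfand's trick for finite groups: if there exists an anti-involution σ of a finite group G with σ(H) = H and HσgH = HgH for all g ∈ G, then every irreducible complex representation ρ of G satisfies dim Hom_H(ρ|_H, ℂ) ≤ 1. -/

import Mathlib

noncomputable section

/-- The space of `H`-invariant linear functionals on a representation `ρ` of `G`,
i.e. `Hom_H(ρ|_H, ℂ)` where `ℂ` is the trivial representation of `H`. -/
def invFunctionals {G : Type} [Group G] {V : Type} [AddCommGroup V] [Module ℂ V]
    (H : Subgroup G) (ρ : Representation ℂ G V) : Submodule ℂ (V →ₗ[ℂ] ℂ) where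
  carrier := {φ | ∀ h ∈ H, ∀ v : V, φ (ρ h v) = φ v}
  add_mem' := by
    intro a b ha hb h hh v
    simp [ha h hh v, hb h hh v]
  zero_mem' := by intro h hh v; simp
  smul_mem' := by
    intro c a ha h hh v
    simp [ha h hh v]


namespace GelfandAux
open MonoidAlgebra Finset
open scoped Classical

set_option linter.unusedSectionVars false

section alg

variable {G : Type} [Group G] [Fintype G] (H : Subgroup G) (σ : G → G)
variable (hmul : ∀ a b : G, σ (a * b) = σ b * σ a)
variable (hinvol : ∀ g : G, σ (σ g) = g)
variable (hH : σ '' (H : Set G) = (H : Set G))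
variable (hcoset : ∀ g : G,
      {x : G | ∃ h₁ ∈ H, ∃ h₂ ∈ H, x = h₁ * σ g * h₂} =
      {x : G | ∃ h₁ ∈ H, ∃ h₂ ∈ H, x = h₁ * g * h₂})

def Hf : Finset G := Finset.univ.filter (· ∈ H)

lemma mem_Hf {x : G} : x ∈ Hf H ↔ x ∈ H := by simp [Hf]

def E : MonoidAlgebra ℂ G := ∑ h ∈ Hf H, MonoidAlgebra.single h 1

include hH in
lemma sigma_mem {h : G} (hh : h ∈ H) : σ h ∈ H := by
  have : σ h ∈ σ '' (H : Set G) := ⟨h, hh, rfl⟩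
  rwa [hH] at this

lemma E_mul_single {h : G} (hh : h ∈ H) :
    E H * MonoidAlgebra.single h (1:ℂ) = E H := by
  rw [E, Finset.sum_mul]
  refine Finset.sum_equiv (Equiv.mulRight h) (fun x => ?_) (fun x hx => ?_)
  · simp only [mem_Hf, Equiv.coe_mulRight]
    exact ⟨fun hx => H.mul_mem hx hh, fun hx => by simpa using H.mul_mem hx (H.inv_mem hh)⟩
  · rw [MonoidAlgebra.single_mul_single, mul_one]; rfl

lemma single_mul_E {h : G} (hh : h ∈ H) :
    MonoidAlgebra.single h (1:ℂ) * E H = E H := by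
  rw [E, Finset.mul_sum]
  refine Finset.sum_equiv (Equiv.mulLeft h) (fun x => ?_) (fun x hx => ?_)
  · simp only [mem_Hf, Equiv.coe_mulLeft]
    exact ⟨fun hx => H.mul_mem hh hx, fun hx => by simpa using H.mul_mem (H.inv_mem hh) hx⟩
  · rw [MonoidAlgebra.single_mul_single, one_mul]; rfl

lemma E_mul_E : E H * E H = ((Hf H).card : ℂ) • E H := by
  nth_rewrite 1 [E]
  rw [Finset.sum_mul]
  rw [Finset.sum_congr rfl (fun h hh => single_mul_E H (mem_Hf H |>.mp hh)), Finset.sum_const]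
  rw [← Nat.cast_smul_eq_nsmul ℂ]

lemma middle (u u' : G) :
    E H * (MonoidAlgebra.single u (1:ℂ) * E H * MonoidAlgebra.single u' 1) * E H =
      ∑ h ∈ Hf H, E H * MonoidAlgebra.single (u * h * u') (1:ℂ) * E H := by
  have h0 : MonoidAlgebra.single u (1:ℂ) * E H * MonoidAlgebra.single u' 1 =
      ∑ h ∈ Hf H, MonoidAlgebra.single (u * h * u') (1:ℂ) := by
    rw [E, Finset.mul_sum, Finset.sum_mul]
    refine Finset.sum_congr rfl (fun h _ => ?_)
    rw [MonoidAlgebra.single_mul_single, MonoidAlgebra.single_mul_single, mul_one, mul_one]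
  rw [h0, Finset.mul_sum, Finset.sum_mul]

lemma splitProd (u u' : G) :
    (E H * MonoidAlgebra.single u (1:ℂ) * E H) * (E H * MonoidAlgebra.single u' 1 * E H) =
      ((Hf H).card : ℂ) •
        (E H * (MonoidAlgebra.single u (1:ℂ) * E H * MonoidAlgebra.single u' 1) * E H) := by
  have h1 : (E H * MonoidAlgebra.single u (1:ℂ) * E H) * (E H * MonoidAlgebra.single u' 1 * E H) =
      E H * MonoidAlgebra.single u 1 * (E H * E H) * (MonoidAlgebra.single u' 1 * E H) := by
    simp only [mul_assoc]
  rw [h1, E_mul_E]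
  simp only [smul_mul_assoc, mul_smul_comm]
  congr 1
  simp only [mul_assoc]

lemma expand (u : G) :
    E H * MonoidAlgebra.single u (1:ℂ) * E H =
      ∑ p ∈ Hf H ×ˢ Hf H, MonoidAlgebra.single (p.1 * u * p.2) (1:ℂ) := by
  rw [E, Finset.sum_mul, Finset.sum_mul]
  calc (∑ i ∈ Hf H, MonoidAlgebra.single i (1:ℂ) * MonoidAlgebra.single u 1 *
        ∑ h ∈ Hf H, MonoidAlgebra.single h 1)
      = ∑ i ∈ Hf H, ∑ h ∈ Hf H, MonoidAlgebra.single (i * u * h) (1:ℂ) := by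
        refine Finset.sum_congr rfl (fun i _ => ?_)
        rw [Finset.mul_sum]
        refine Finset.sum_congr rfl (fun h _ => ?_)
        rw [MonoidAlgebra.single_mul_single, MonoidAlgebra.single_mul_single, mul_one, one_mul]
    _ = ∑ p ∈ Hf H ×ˢ Hf H, MonoidAlgebra.single (p.1 * u * p.2) (1:ℂ) :=
        (Finset.sum_product' _ _ _).symm

include hmul hinvol hH hcoset in
lemma K1 (g : G) :
    E H * MonoidAlgebra.single g (1:ℂ) * E H = E H * MonoidAlgebra.single (σ g) (1:ℂ) * E H := by
  classical
  have hinj : Function.Injective σ := Function.LeftInverse.injective hinvol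
  rw [expand, expand]
  ext x
  rw [MonoidAlgebra.coeff_sum, MonoidAlgebra.coeff_sum, Finset.sum_apply', Finset.sum_apply']
  by_cases hx : ∃ h₁ ∈ H, ∃ h₂ ∈ H, x = h₁ * g * h₂
  · obtain ⟨c, hc, d, hd, hx1⟩ := hx
    have hx2 : ∃ h₁ ∈ H, ∃ h₂ ∈ H, x = h₁ * σ g * h₂ := by
      have : x ∈ {x : G | ∃ h₁ ∈ H, ∃ h₂ ∈ H, x = h₁ * g * h₂} := ⟨c, hc, d, hd, hx1⟩
      rwa [← hcoset g] at this
    obtain ⟨a, ha, b, hb, hx2⟩ := hx2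
    refine Finset.sum_nbij' (fun p => (a * σ (p.2 * d⁻¹), σ (c⁻¹ * p.1) * b))
      (fun q => (c * σ (q.2 * b⁻¹), σ (a⁻¹ * q.1) * d)) ?_ ?_ ?_ ?_ ?_
    · rintro ⟨p1, p2⟩ hp
      rw [Finset.mem_product] at hp ⊢
      obtain ⟨hp1, hp2⟩ := hp
      rw [mem_Hf] at hp1 hp2 ⊢
      constructor
      · exact H.mul_mem ha (sigma_mem H σ hH (H.mul_mem hp2 (H.inv_mem hd)))
      · rw [mem_Hf]
        exact H.mul_mem (sigma_mem H σ hH (H.mul_mem (H.inv_mem hc) hp1)) hb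
    · rintro ⟨q1, q2⟩ hq
      rw [Finset.mem_product] at hq ⊢
      obtain ⟨hq1, hq2⟩ := hq
      rw [mem_Hf] at hq1 hq2 ⊢
      constructor
      · exact H.mul_mem hc (sigma_mem H σ hH (H.mul_mem hq2 (H.inv_mem hb)))
      · rw [mem_Hf]
        exact H.mul_mem (sigma_mem H σ hH (H.mul_mem (H.inv_mem ha) hq1)) hd
    · rintro ⟨p1, p2⟩ _
      simp only [Prod.mk.injEq]
      constructor
      · simp [hinvol]
      · simp [hinvol]
    · rintro ⟨q1, q2⟩ _
      simp only [Prod.mk.injEq]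
      constructor
      · simp [hinvol]
      · simp [hinvol]
    · rintro ⟨p1, p2⟩ _
      rw [MonoidAlgebra.single_apply, MonoidAlgebra.single_apply]
      refine if_congr ?_ rfl rfl
      simp only
      have e1 : a * σ (p2 * d⁻¹) * σ g * (σ (c⁻¹ * p1) * b) =
          a * σ ((c⁻¹ * p1) * (g * (p2 * d⁻¹))) * b := by
        rw [hmul (c⁻¹ * p1) (g * (p2 * d⁻¹)), hmul g (p2 * d⁻¹)]
        simp [mul_assoc]
      constructor
      · intro h
        have hw : (c⁻¹ * p1) * (g * (p2 * d⁻¹)) = g := by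
          have h2 : p1 * g * p2 = c * g * d := h.trans hx1
          calc (c⁻¹ * p1) * (g * (p2 * d⁻¹)) = c⁻¹ * (p1 * g * p2) * d⁻¹ := by group
            _ = c⁻¹ * (c * g * d) * d⁻¹ := by rw [h2]
            _ = g := by group
        rw [e1, hw, ← hx2]
      · intro h
        rw [e1] at h
        have h2 : a * σ ((c⁻¹ * p1) * (g * (p2 * d⁻¹))) * b = a * σ g * b := h.trans hx2
        have h3 : σ ((c⁻¹ * p1) * (g * (p2 * d⁻¹))) = σ g :=
          mul_left_cancel (mul_right_cancel h2)
        have h4 : (c⁻¹ * p1) * (g * (p2 * d⁻¹)) = g := hinj h3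
        calc p1 * g * p2 = c * ((c⁻¹ * p1) * (g * (p2 * d⁻¹))) * d := by group
          _ = c * g * d := by rw [h4]
          _ = x := hx1.symm
  · refine Eq.trans (Finset.sum_eq_zero ?_) (Finset.sum_eq_zero ?_).symm
    · rintro ⟨p1, p2⟩ hp
      rw [Finset.mem_product, mem_Hf, mem_Hf] at hp
      rw [MonoidAlgebra.single_apply, if_neg]
      intro hcontra
      exact hx ⟨p1, hp.1, p2, hp.2, hcontra.symm⟩
    · rintro ⟨p1, p2⟩ hp
      rw [Finset.mem_product, mem_Hf, mem_Hf] at hp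
      rw [MonoidAlgebra.single_apply, if_neg]
      intro hcontra
      apply hx
      have : x ∈ {x : G | ∃ h₁ ∈ H, ∃ h₂ ∈ H, x = h₁ * σ g * h₂} := ⟨p1, hp.1, p2, hp.2, hcontra.symm⟩
      rwa [hcoset g] at this

include hmul hinvol hH hcoset in
lemma stepC (g g' : G) :
    ∑ h ∈ Hf H, E H * MonoidAlgebra.single (g * h * g') (1:ℂ) * E H =
    ∑ h ∈ Hf H, E H * MonoidAlgebra.single (σ g' * h * σ g) (1:ℂ) * E H := by
  have t1 : ∀ h : G, E H * MonoidAlgebra.single (g * h * g') (1:ℂ) * E H =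
      E H * MonoidAlgebra.single (σ g' * σ h * σ g) (1:ℂ) * E H := by
    intro h
    rw [K1 H σ hmul hinvol hH hcoset (g * h * g')]
    congr 2
    rw [hmul, hmul]
    simp [mul_assoc]
  rw [Finset.sum_congr rfl (fun h _ => t1 h)]
  refine Finset.sum_nbij' σ σ ?_ ?_ ?_ ?_ ?_
  · intro h hh; exact (mem_Hf H).mpr (sigma_mem H σ hH ((mem_Hf H).mp hh))
  · intro h hh; exact (mem_Hf H).mpr (sigma_mem H σ hH ((mem_Hf H).mp hh))
  · intro h _; exact hinvol h
  · intro h _; exact hinvol h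
  · intro h _; rfl

include hmul hinvol hH hcoset in
lemma comm_gen (g g' : G) :
    (E H * MonoidAlgebra.single g (1:ℂ) * E H) * (E H * MonoidAlgebra.single g' 1 * E H) =
    (E H * MonoidAlgebra.single g' (1:ℂ) * E H) * (E H * MonoidAlgebra.single g 1 * E H) := by
  calc (E H * MonoidAlgebra.single g (1:ℂ) * E H) * (E H * MonoidAlgebra.single g' 1 * E H)
      = ((Hf H).card : ℂ) •
          (E H * (MonoidAlgebra.single g (1:ℂ) * E H * MonoidAlgebra.single g' 1) * E H) :=
        splitProd H g g'
    _ = ((Hf H).card : ℂ) • ∑ h ∈ Hf H, E H * MonoidAlgebra.single (g * h * g') (1:ℂ) * E H := by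
        rw [middle]
    _ = ((Hf H).card : ℂ) •
          ∑ h ∈ Hf H, E H * MonoidAlgebra.single (σ g' * h * σ g) (1:ℂ) * E H := by
        rw [stepC H σ hmul hinvol hH hcoset]
    _ = ((Hf H).card : ℂ) •
          (E H * (MonoidAlgebra.single (σ g') (1:ℂ) * E H * MonoidAlgebra.single (σ g) 1) * E H) := by
        rw [middle]
    _ = (E H * MonoidAlgebra.single (σ g') (1:ℂ) * E H) *
          (E H * MonoidAlgebra.single (σ g) 1 * E H) := (splitProd H (σ g') (σ g)).symm
    _ = (E H * MonoidAlgebra.single g' (1:ℂ) * E H) * (E H * MonoidAlgebra.single g 1 * E H) := by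
        rw [← K1 H σ hmul hinvol hH hcoset g', ← K1 H σ hmul hinvol hH hcoset g]

include hmul hinvol hH hcoset in
lemma comm_single (g : G) (b : MonoidAlgebra ℂ G) :
    (E H * MonoidAlgebra.single g (1:ℂ) * E H) * (E H * b * E H) =
    (E H * b * E H) * (E H * MonoidAlgebra.single g (1:ℂ) * E H) := by
  induction b using MonoidAlgebra.induction_linear with
  | zero => simp
  | add f f' hf hf' =>
    simp only [mul_add, add_mul]
    rw [hf, hf']
  | single g' r =>
    have hr : (MonoidAlgebra.single g' r : MonoidAlgebra ℂ G) = r • MonoidAlgebra.single g' (1:ℂ) := by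
      rw [MonoidAlgebra.smul_single', mul_one]
    rw [hr]
    simp only [mul_smul_comm, smul_mul_assoc]
    rw [comm_gen H σ hmul hinvol hH hcoset g g']

include hmul hinvol hH hcoset in
lemma comm (a b : MonoidAlgebra ℂ G) :
    (E H * a * E H) * (E H * b * E H) = (E H * b * E H) * (E H * a * E H) := by
  induction a using MonoidAlgebra.induction_linear with
  | zero => simp
  | add f f' hf hf' =>
    simp only [mul_add, add_mul]
    rw [hf, hf']
  | single g r =>
    have hr : (MonoidAlgebra.single g r : MonoidAlgebra ℂ G) = r • MonoidAlgebra.single g (1:ℂ) := by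
      rw [MonoidAlgebra.smul_single', mul_one]
    rw [hr]
    simp only [mul_smul_comm, smul_mul_assoc]
    rw [comm_single H σ hmul hinvol hH hcoset g b]

variable {V : Type} [AddCommGroup V] [Module ℂ V] (ρ : Representation ℂ G V)

lemma ract_mul (φ : V →ₗ[ℂ] ℂ) (a b : MonoidAlgebra ℂ G) :
    φ.comp (ρ.asAlgebraHom (a * b)) =
      (φ.comp (ρ.asAlgebraHom a)).comp (ρ.asAlgebraHom b) := by
  rw [map_mul]; rfl

lemma memW_of_actE (φ : V →ₗ[ℂ] ℂ) (a : MonoidAlgebra ℂ G) :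
    φ.comp (ρ.asAlgebraHom (a * E H)) ∈ invFunctionals H ρ := by
  intro h hh v
  have h1 : a * E H * MonoidAlgebra.single h 1 = a * E H := by
    rw [mul_assoc, E_mul_single H hh]
  have key : φ.comp (ρ.asAlgebraHom (a * E H)) ∘ₗ ρ h = φ.comp (ρ.asAlgebraHom (a * E H)) := by
    conv_lhs => rw [← Representation.asAlgebraHom_single_one ρ h]
    rw [← ract_mul ρ φ (a * E H) (MonoidAlgebra.single h 1), h1]
  exact congrFun (congrArg (fun f => f.toFun) key) v

lemma W_actE {φ : V →ₗ[ℂ] ℂ} (hφ : φ ∈ invFunctionals H ρ) :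
    φ.comp (ρ.asAlgebraHom (E H)) = ((Hf H).card : ℂ) • φ := by
  ext v
  have : φ (ρ.asAlgebraHom (E H) v) = ((Hf H).card : ℂ) • φ v :=
    calc φ (ρ.asAlgebraHom (E H) v)
        = φ (∑ h ∈ Hf H, ρ.asAlgebraHom (MonoidAlgebra.single h 1) v) := by
          rw [E, map_sum, LinearMap.sum_apply]
      _ = ∑ h ∈ Hf H, φ (ρ h v) := by
          rw [map_sum]
          exact Finset.sum_congr rfl fun h _ => by rw [Representation.asAlgebraHom_single_one]
      _ = ∑ h ∈ Hf H, φ v :=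
          Finset.sum_congr rfl fun h hh => hφ h ((mem_Hf H).mp hh) v
      _ = ((Hf H).card : ℂ) • φ v := by rw [Finset.sum_const, ← Nat.cast_smul_eq_nsmul ℂ]
  simpa using this

lemma cyclic (hs : IsSimpleModule (MonoidAlgebra ℂ G) ρ.asModule) {v : V} (hv : v ≠ 0)
    (w : V) : ∃ a : MonoidAlgebra ℂ G, ρ.asAlgebraHom a v = w := by
  haveI := hs
  let v' : ρ.asModule := v
  rcases eq_bot_or_eq_top (Submodule.span (MonoidAlgebra ℂ G) {v'}) with hb | ht
  · exfalso
    apply hv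
    have : v' ∈ Submodule.span (MonoidAlgebra ℂ G) {v'} := Submodule.mem_span_singleton_self v'
    rw [hb, Submodule.mem_bot] at this
    exact this
  · have : (show ρ.asModule from w) ∈ Submodule.span (MonoidAlgebra ℂ G) {v'} := by
      rw [ht]; trivial
    obtain ⟨a, ha⟩ := Submodule.mem_span_singleton.mp this
    exact ⟨a, ha⟩

lemma fd (hs : IsSimpleModule (MonoidAlgebra ℂ G) ρ.asModule) : FiniteDimensional ℂ V := by
  haveI := hs
  haveI : Nontrivial ρ.asModule := IsSimpleModule.nontrivial (MonoidAlgebra ℂ G) ρ.asModule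
  obtain ⟨v, hv⟩ := exists_ne (0 : ρ.asModule)
  let f : MonoidAlgebra ℂ G →ₗ[ℂ] V :=
    { toFun := fun a => ρ.asAlgebraHom a v
      map_add' := fun a b => by rw [map_add]; rfl
      map_smul' := fun c a => by rw [map_smul]; rfl }
  have hf : Function.Surjective f := fun w => cyclic ρ hs hv w
  haveI : Module.Finite ℂ (MonoidAlgebra ℂ G) :=
    Module.Finite.equiv ((Finsupp.linearEquivFunOnFinite ℂ ℂ G).symm.trans (MonoidAlgebra.coeffLinearEquiv ℂ).symm)
  exact Module.Finite.of_surjective f hf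

lemma density (hs : IsSimpleModule (MonoidAlgebra ℂ G) ρ.asModule)
    {φ : V →ₗ[ℂ] ℂ} (hφ : φ ≠ 0) (ψ : V →ₗ[ℂ] ℂ) :
    ∃ a : MonoidAlgebra ℂ G, ψ = φ.comp (ρ.asAlgebraHom a) := by
  haveI := fd ρ hs
  let F : MonoidAlgebra ℂ G →ₗ[ℂ] (V →ₗ[ℂ] ℂ) :=
    { toFun := fun a => φ.comp (ρ.asAlgebraHom a)
      map_add' := fun a b => by rw [map_add, LinearMap.comp_add]
      map_smul' := fun c a => by simp only [map_smul, LinearMap.comp_smul, RingHom.id_apply] }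
  have hspan : Submodule.span ℂ (Set.range F) = ⊤ := by
    apply Submodule.span_eq_top_of_ne_zero
    intro z hz
    obtain ⟨v₀, hv₀⟩ : ∃ v₀, φ v₀ ≠ 0 := by
      by_contra hc
      push_neg at hc
      exact hφ (LinearMap.ext fun v => by simpa using hc v)
    obtain ⟨a, ha⟩ := cyclic ρ hs hz v₀
    refine ⟨F a, ⟨a, rfl⟩, ?_⟩
    simpa [F, ha] using hv₀
  have hmem : ψ ∈ Submodule.span ℂ (Set.range F) := by rw [hspan]; trivial
  rw [← LinearMap.coe_range, Submodule.span_eq] at hmem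
  obtain ⟨a, ha⟩ := hmem
  exact ⟨a, ha.symm⟩


end alg
end GelfandAux

open GelfandAux in
/-- **Gelfand's trick for finite groups.** If there is an anti-involution `σ`
of a finite group `G` with `σ(H) = H` and `Hσ(g)H = HgH` for all `g`, then every irreducible
complex representation `ρ` of `G` satisfies `dim Hom_H(ρ|_H, ℂ) ≤ 1`. -/
theorem stmt1 {G : Type} [Group G] [Fintype G] (H : Subgroup G) (σ : G → G)
    (hmul : ∀ a b : G, σ (a * b) = σ b * σ a)
    (hinvol : ∀ g : G, σ (σ g) = g)
    (hH : σ '' (H : Set G) = (H : Set G))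
    (hcoset : ∀ g : G,
      {x : G | ∃ h₁ ∈ H, ∃ h₂ ∈ H, x = h₁ * σ g * h₂} =
      {x : G | ∃ h₁ ∈ H, ∃ h₂ ∈ H, x = h₁ * g * h₂}) :
    ∀ (V : Type) [AddCommGroup V] [Module ℂ V] (ρ : Representation ℂ G V),
      IsSimpleModule (MonoidAlgebra ℂ G) ρ.asModule →
      Module.rank ℂ (invFunctionals H ρ) ≤ 1 := by
  intro V _ _ ρ hs
  haveI : FiniteDimensional ℂ V := GelfandAux.fd ρ hs
  set N : ℂ := ((Hf H).card : ℂ) with hN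
  have hNnz : N ≠ 0 := by
    rw [hN]
    exact_mod_cast Finset.card_ne_zero_of_mem ((mem_Hf H).mpr H.one_mem)
  by_cases hW : invFunctionals H ρ = ⊥
  · rw [hW]
    simp
  · obtain ⟨φ, hφW, hφ0⟩ := Submodule.exists_mem_ne_zero_of_ne_bot hW
    have key : ∀ ψ ∈ invFunctionals H ρ, ∃ c : ℂ, ψ = c • φ := by
      intro ψ hψ
      -- Step 1: express ψ through a Hecke operator applied to φ
      obtain ⟨a, ha⟩ := GelfandAux.density ρ hs hφ0 ψ
      have hx : φ.comp (ρ.asAlgebraHom (E H * a * E H)) = (N * N) • ψ := by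
        rw [ract_mul, ract_mul, W_actE H ρ hφW, LinearMap.smul_comp, LinearMap.smul_comp,
          ← ha, W_actE H ρ hψ, smul_smul]
      -- Step 2: eigenvector of the Hecke operator on W
      let f : (V →ₗ[ℂ] ℂ) →ₗ[ℂ] (V →ₗ[ℂ] ℂ) :=
        { toFun := fun χ => χ.comp (ρ.asAlgebraHom (E H * a * E H))
          map_add' := fun u w => by rw [LinearMap.add_comp]
          map_smul' := fun c u => by simp only [LinearMap.smul_comp, RingHom.id_apply] }
      have hfW : ∀ χ ∈ invFunctionals H ρ, f χ ∈ invFunctionals H ρ := fun χ _ =>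
        memW_of_actE H ρ χ (E H * a)
      let T := f.restrict hfW
      haveI : Nontrivial (invFunctionals H ρ) := by
        refine ⟨⟨φ, hφW⟩, 0, ?_⟩
        simp [Submodule.mk_eq_zero, hφ0]
      obtain ⟨μ, hμ⟩ := Module.End.exists_eigenvalue T
      obtain ⟨χ, hχ⟩ := hμ.exists_hasEigenvector
      have hχ0 : (χ : V →ₗ[ℂ] ℂ) ≠ 0 := by
        intro hc
        exact hχ.right (by simpa [Submodule.coe_eq_zero] using hc)
      have heig : (χ : V →ₗ[ℂ] ℂ).comp (ρ.asAlgebraHom (E H * a * E H)) = μ • (χ : V →ₗ[ℂ] ℂ) := by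
        have h1 := hχ.apply_eq_smul
        have h2 := congrArg (Subtype.val) h1
        simpa [T, LinearMap.restrict_apply, f] using h2
      -- Step 3: express φ through a Hecke operator applied to χ
      obtain ⟨b, hb⟩ := GelfandAux.density ρ hs hχ0 φ
      have hy : (χ : V →ₗ[ℂ] ℂ).comp (ρ.asAlgebraHom (E H * b * E H)) = (N * N) • φ := by
        rw [ract_mul, ract_mul, W_actE H ρ χ.2, LinearMap.smul_comp, LinearMap.smul_comp,
          ← hb, W_actE H ρ hφW, smul_smul]
      -- Step 4: combine
      have hcomb : ((N * N) * (N * N)) • ψ = (μ * (N * N)) • φ := by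
        calc ((N * N) * (N * N)) • ψ = (N * N) • ((N * N) • ψ) := by rw [smul_smul]
          _ = (N * N) • φ.comp (ρ.asAlgebraHom (E H * a * E H)) := by rw [hx]
          _ = ((N * N) • φ).comp (ρ.asAlgebraHom (E H * a * E H)) := by
              rw [LinearMap.smul_comp]
          _ = ((χ : V →ₗ[ℂ] ℂ).comp (ρ.asAlgebraHom (E H * b * E H))).comp
                (ρ.asAlgebraHom (E H * a * E H)) := by rw [hy]
          _ = (χ : V →ₗ[ℂ] ℂ).comp (ρ.asAlgebraHom ((E H * b * E H) * (E H * a * E H))) :=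
              (ract_mul ρ (χ : V →ₗ[ℂ] ℂ) (E H * b * E H) (E H * a * E H)).symm
          _ = (χ : V →ₗ[ℂ] ℂ).comp (ρ.asAlgebraHom ((E H * a * E H) * (E H * b * E H))) := by
              rw [comm H σ hmul hinvol hH hcoset b a]
          _ = ((χ : V →ₗ[ℂ] ℂ).comp (ρ.asAlgebraHom (E H * a * E H))).comp
                (ρ.asAlgebraHom (E H * b * E H)) :=
              ract_mul ρ (χ : V →ₗ[ℂ] ℂ) (E H * a * E H) (E H * b * E H)
          _ = (μ • (χ : V →ₗ[ℂ] ℂ)).comp (ρ.asAlgebraHom (E H * b * E H)) := by rw [heig]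
          _ = μ • ((χ : V →ₗ[ℂ] ℂ).comp (ρ.asAlgebraHom (E H * b * E H))) := by
              rw [LinearMap.smul_comp]
          _ = μ • ((N * N) • φ) := by rw [hy]
          _ = (μ * (N * N)) • φ := by rw [smul_smul]
      have hNN4 : ((N * N) * (N * N)) ≠ 0 := by
        simp [hNnz]
      refine ⟨((N * N) * (N * N))⁻¹ * (μ * (N * N)), ?_⟩
      calc ψ = (((N * N) * (N * N))⁻¹ * ((N * N) * (N * N))) • ψ := by
            rw [inv_mul_cancel₀ hNN4, one_smul]
        _ = ((N * N) * (N * N))⁻¹ • (((N * N) * (N * N)) • ψ) := by rw [smul_smul]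
        _ = ((N * N) * (N * N))⁻¹ • ((μ * (N * N)) • φ) := by rw [hcomb]
        _ = (((N * N) * (N * N))⁻¹ * (μ * (N * N))) • φ := by rw [smul_smul]
    have hWspan : invFunctionals H ρ = Submodule.span ℂ {φ} := by
      refine le_antisymm ?_ ?_
      · intro ψ hψ
        obtain ⟨c, hc⟩ := key ψ hψ
        rw [Submodule.mem_span_singleton]
        exact ⟨c, hc.symm⟩
      · rw [Submodule.span_le, Set.singleton_subset_iff]
        exact hφW
    exact (Submodule.rank_le_one_iff_isPrincipal _).mpr ⟨⟨φ, hWspan⟩⟩
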